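/- Let M be a Riemannian manifold of dimension l ≥ 2 and N ≥ 2. The set V of tuples (x, n₁, …, n_N) with x ∈ M, each n_k a unit vector in T_x M, Σ n_k = 0, and such that some pair n_{k₁}, n_{k₂} is linearly independent, is a smooth submanifold of the N-fold fiber product of the unit sphere bundle of dimension N(l−1). -/

import Mathlib

open scoped Manifold

/-- The set `V` of tuples `(x, n₁, …, n_N)` with `x ∈ ℝˡ` (the Euclidean model of an
`l`-dimensional Riemannian manifold, whose tangent spaces are canonically `ℝˡ`), each
`n_k` a unit tangent vector at `x`, `∑ n_k = 0`, and some pair `n_{k₁}, n_{k₂}` linearly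
independent. -/
def V (l N : ℕ) : Set (EuclideanSpace ℝ (Fin l) × (Fin N → EuclideanSpace ℝ (Fin l))) :=
  {p | (∀ k, ‖p.2 k‖ = 1) ∧ (∑ k, p.2 k) = 0 ∧
    ∃ k₁ k₂ : Fin N, LinearIndependent ℝ ![p.2 k₁, p.2 k₂]}

open scoped ContDiff
open Set Function Module
set_option maxHeartbeats 2000000

section General

variable {E F : Type*} [NormedAddCommGroup E] [NormedSpace ℝ E] [FiniteDimensional ℝ E]
  [NormedAddCommGroup F] [NormedSpace ℝ F] [FiniteDimensional ℝ F]

/-- Existence of charts on a regular level set. -/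
theorem levelSet_chart_exists (f : E → F) (hf : ContDiff ℝ ∞ f) (U : Set E) (hU : IsOpen U)
    (d : ℕ)
    (hsurj : ∀ p ∈ U ∩ f ⁻¹' {0}, LinearMap.range (fderiv ℝ f p : E →ₗ[ℝ] F) = ⊤)
    (hd : Module.finrank ℝ E = d + Module.finrank ℝ F)
    (p : (U ∩ f ⁻¹' {0} : Set E)) :
    ∃ (e : OpenPartialHomeomorph (U ∩ f ⁻¹' {0} : Set E) (EuclideanSpace ℝ (Fin d)))
      (Fwd : E → EuclideanSpace ℝ (Fin d)) (Bwd : EuclideanSpace ℝ (Fin d) → E),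
      p ∈ e.source ∧ ContDiff ℝ ∞ Fwd ∧
      (∀ y ∈ e.target, ContDiffAt ℝ ∞ Bwd y) ∧
      (∀ v, v ∈ e.source → e v = Fwd ↑v) ∧
      (∀ y ∈ e.target, ↑(e.symm y) = Bwd y) := by
  classical
  obtain ⟨hpU, hp0⟩ := p.2
  rw [Set.mem_preimage, Set.mem_singleton_iff] at hp0
  set f' : E →L[ℝ] F := fderiv ℝ f (↑p) with hf'def
  have hder : HasStrictFDerivAt f f' ↑p :=
    (hf.contDiffAt).hasStrictFDerivAt (by norm_num)
  have hrange : LinearMap.range (f' : E →ₗ[ℝ] F) = ⊤ := hsurj ↑p p.2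
  set K := LinearMap.ker (f' : E →ₗ[ℝ] F) with hKdef
  -- dimension of the kernel
  have hK : Module.finrank ℝ K = d := by
    have h1 := LinearMap.finrank_range_add_finrank_ker (f' : E →ₗ[ℝ] F)
    have h2 : Module.finrank ℝ (LinearMap.range (f' : E →ₗ[ℝ] F)) = Module.finrank ℝ F := by
      have : LinearMap.range (f' : E →ₗ[ℝ] F) = ⊤ := hrange
      rw [this, finrank_top]
    rw [h2, hd] at h1
    have h3 : LinearMap.ker (f' : E →ₗ[ℝ] F) = K := rfl
    rw [h3] at h1
    omega
  have hcc : K.ClosedComplemented := f'.ker_closedComplemented_of_finiteDimensional_range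
  obtain ⟨π, hπ⟩ := hcc
  obtain ⟨κ⟩ : Nonempty (K ≃L[ℝ] EuclideanSpace ℝ (Fin d)) :=
    FiniteDimensional.nonempty_continuousLinearEquiv_of_finrank_eq
      (by rw [hK, finrank_euclideanSpace_fin])
  -- implicit function data
  set data : ImplicitFunctionData ℝ E F K :=
    { leftFun := f
      leftDeriv := f'
      rightFun := fun x => π (x - ↑p)
      rightDeriv := π
      pt := ↑p
      hasStrictFDerivAt_leftFun := hder
      hasStrictFDerivAt_rightFun := π.hasStrictFDerivAt.comp (↑p : E) ((hasStrictFDerivAt_id (↑p : E)).sub_const ↑p)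
      range_leftDeriv := hrange
      range_rightDeriv := LinearMap.range_eq_of_proj hπ
      isCompl_ker := LinearMap.isCompl_of_proj hπ } with hdata
  set Φ := data.toOpenPartialHomeomorph with hΦdef
  have hΦcoe : ⇑Φ = fun y => (f y, π (y - ↑p)) := rfl
  have hΦsmooth : ContDiff ℝ ∞ ⇑Φ := by
    rw [hΦcoe]
    exact hf.prodMk (π.contDiff.comp (contDiff_id.sub contDiff_const))
  have hpmem : ↑p ∈ Φ.source := hΦdef ▸ data.pt_mem_toOpenPartialHomeomorph_source
  -- the derivative family of Φ
  set T : E → (E →L[ℝ] F × K) := fun y => (fderiv ℝ f y).prod π with hTdef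
  have hT : ∀ y, HasFDerivAt (⇑Φ) (T y) y := by
    intro y
    rw [hΦcoe]
    refine HasFDerivAt.prodMk ((hf.differentiable (by norm_num)) y).hasFDerivAt ?_
    simpa [Function.comp_def] using π.hasFDerivAt.comp y ((hasFDerivAt_id y).sub_const (↑p : E))
  have hTcont : Continuous T := by
    have h : T = (ContinuousLinearMap.prodₗᵢ (𝕜 := ℝ) (E := E) ℝ) ∘
        (fun y => (fderiv ℝ f y, π)) := rfl
    rw [h]
    exact (ContinuousLinearMap.prodₗᵢ ℝ).continuous.comp
      ((hf.continuous_fderiv (by norm_num)).prodMk continuous_const)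
  set Ω : Set E := T ⁻¹' (Set.range (fun (e : E ≃L[ℝ] F × K) => (e : E →L[ℝ] F × K))) with hΩdef
  have hΩopen : IsOpen Ω := ContinuousLinearEquiv.isOpen.preimage hTcont
  have hΩp : ↑p ∈ Ω := by
    refine ⟨f'.equivProdOfSurjectiveOfIsCompl π hrange (LinearMap.range_eq_of_proj hπ)
      (LinearMap.isCompl_of_proj hπ), ?_⟩
    ext v
    · simp [ContinuousLinearMap.equivProdOfSurjectiveOfIsCompl, hTdef, hf'def]
    · simp [ContinuousLinearMap.equivProdOfSurjectiveOfIsCompl, hTdef]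
      rfl
  -- shrunken ambient source
  set s' : Set E := Φ.source ∩ U ∩ Ω with hs'def
  have hs'open : IsOpen s' := ((Φ.open_source.inter hU).inter hΩopen)
  have hps' : ↑p ∈ s' := ⟨⟨hpmem, hpU⟩, hΩp⟩
  -- the backward map
  set Bwd : EuclideanSpace ℝ (Fin d) → E := fun y => Φ.symm (0, κ.symm y) with hBwddef
  set t : Set (EuclideanSpace ℝ (Fin d)) :=
    {y | (0, κ.symm y) ∈ Φ.target ∧ Bwd y ∈ s'} with htdef
  -- membership facts
  have hΦval : ∀ v : E, f v = 0 → Φ v = (0, π (v - ↑p)) := by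
    intro v hv
    rw [hΦcoe]
    simp [hv]
  have hBwdS : ∀ y ∈ t, Bwd y ∈ U ∩ f ⁻¹' {0} := by
    intro y hy
    refine ⟨hy.2.1.2, ?_⟩
    have h1 : Φ (Bwd y) = (0, κ.symm y) := Φ.right_inv hy.1
    have h2 : f (Bwd y) = 0 := by
      have h3 := congrArg Prod.fst h1
      rwa [hΦcoe] at h3
    simpa using h2
  have hto : ∀ v : (U ∩ f ⁻¹' {0} : Set E), (v : E) ∈ Φ.source →
      Φ ↑v = (0, π ((v : E) - ↑p)) := fun v _ => hΦval ↑v v.2.2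
  -- the chart
  refine ⟨{
      toFun := fun v => κ (π ((v : E) - ↑p))
      invFun := fun y => if h : Bwd y ∈ U ∩ f ⁻¹' {0} then ⟨Bwd y, h⟩ else p
      source := Subtype.val ⁻¹' s'
      target := t
      map_source' := by
        rintro v hv
        have h1 : (v : E) ∈ Φ.source := hv.1.1
        have hΦv : Φ ↑v = (0, π ((v : E) - ↑p)) := hto v h1
        refine ⟨?_, ?_⟩
        · rw [ContinuousLinearEquiv.symm_apply_apply, ← hΦv]
          exact Φ.map_source h1
        · show Φ.symm (0, κ.symm (κ (π ((v : E) - ↑p)))) ∈ s'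
          rw [ContinuousLinearEquiv.symm_apply_apply, ← hΦv, Φ.left_inv h1]
          exact hv
      map_target' := by
        intro y hy
        have hS : Bwd y ∈ U ∩ f ⁻¹' {0} := hBwdS y hy
        simp only [dif_pos hS]
        exact hy.2
      left_inv' := by
        intro v hv
        have h1 : (v : E) ∈ Φ.source := hv.1.1
        have hΦv : Φ ↑v = (0, π ((v : E) - ↑p)) := hto v h1
        have hb : Bwd (κ (π ((v : E) - ↑p))) = ↑v := by
          rw [hBwddef]
          simp only [ContinuousLinearEquiv.symm_apply_apply]
          rw [← hΦv, Φ.left_inv h1]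
        have hS : Bwd (κ (π ((v : E) - ↑p))) ∈ U ∩ f ⁻¹' {0} := by rw [hb]; exact v.2
        simp only [dif_pos hS]
        exact Subtype.ext hb
      right_inv' := by
        intro y hy
        have hS : Bwd y ∈ U ∩ f ⁻¹' {0} := hBwdS y hy
        simp only [dif_pos hS]
        have h1 : Φ (Bwd y) = (0, κ.symm y) := Φ.right_inv hy.1
        have h2 : π (Bwd y - ↑p) = κ.symm y := by
          have h3 := congrArg Prod.snd h1
          rwa [hΦcoe] at h3
        show κ (π (Bwd y - ↑p)) = y
        rw [h2, ContinuousLinearEquiv.apply_symm_apply]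
      open_source := hs'open.preimage continuous_subtype_val
      open_target := by
        have h1 : IsOpen (Φ.target ∩ Φ.symm ⁻¹' s') :=
          Φ.isOpen_inter_preimage_symm hs'open
        exact h1.preimage (continuous_const.prodMk κ.symm.continuous)
      continuousOn_toFun := by
        exact (κ.continuous.comp (π.continuous.comp
          (continuous_subtype_val.sub continuous_const))).continuousOn
      continuousOn_invFun := by
        have hB : ContinuousOn Bwd t := by
          refine (Φ.continuousOn_symm.comp
            ((continuous_const.prodMk κ.symm.continuous).continuousOn) ?_)
          intro y hy
          exact hy.1
        rw [(Topology.IsInducing.subtypeVal).continuousOn_iff]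
        refine hB.congr ?_
        intro y hy
        simp only [Function.comp_apply, dif_pos (hBwdS y hy)]
    }, fun y => κ (π (y - ↑p)), Bwd, hps', ?_, ?_, fun v _ => rfl, ?_⟩
  · exact (κ.toContinuousLinearMap.comp π).contDiff.comp (contDiff_id.sub contDiff_const)
  · -- smoothness of Bwd on the target
    intro y hy
    have hx : Bwd y ∈ Ω := hy.2.2
    obtain ⟨eq, heq⟩ := hx
    have hsymm : ContDiffAt ℝ ∞ Φ.symm (0, κ.symm y) := by
      refine Φ.contDiffAt_symm (f₀' := eq) hy.1 ?_ hΦsmooth.contDiffAt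
      rw [show ((eq : E →L[ℝ] F × K)) = T (Φ.symm (0, κ.symm y)) from heq]
      exact hT _
    exact ContDiffAt.comp y hsymm ((contDiff_const.prodMk κ.symm.contDiff).contDiffAt)
  · intro y hy
    exact congrArg Subtype.val (dif_pos (hBwdS y hy))

theorem levelSet_manifold (f : E → F) (hf : ContDiff ℝ ∞ f) (U : Set E) (hU : IsOpen U)
    (d : ℕ)
    (hsurj : ∀ p ∈ U ∩ f ⁻¹' {0}, LinearMap.range (fderiv ℝ f p : E →ₗ[ℝ] F) = ⊤)
    (hd : Module.finrank ℝ E = d + Module.finrank ℝ F) :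
    ∃ cs : ChartedSpace (EuclideanSpace ℝ (Fin d)) (U ∩ f ⁻¹' {0} : Set E),
      @IsManifold ℝ _ (EuclideanSpace ℝ (Fin d)) _ _
        (EuclideanSpace ℝ (Fin d)) _ (𝓡 d) (⊤ : ℕ∞) (U ∩ f ⁻¹' {0} : Set E) _ cs := by
  choose chart Fwd Bwd hmem hFwd hBwd hFeq hBeq using
    levelSet_chart_exists f hf U hU d hsurj hd
  letI cs : ChartedSpace (EuclideanSpace ℝ (Fin d)) (U ∩ f ⁻¹' {0} : Set E) :=
    ⟨Set.range chart, chart, hmem, fun p => Set.mem_range_self p⟩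
  refine ⟨cs, isManifold_of_contDiffOn _ _ _ ?_⟩
  rintro e e' ⟨p, rfl⟩ ⟨q, rfl⟩
  simp only [modelWithCornersSelf_coe, modelWithCornersSelf_coe_symm, Set.range_id,
    Set.inter_univ, Set.preimage_id, CompTriple.comp_eq, Function.comp_id, Function.id_comp]
  intro y hy
  rw [OpenPartialHomeomorph.trans_source] at hy
  obtain ⟨hy1, hy2⟩ := hy
  rw [OpenPartialHomeomorph.symm_source] at hy1
  refine (ContDiffAt.comp y ((hFwd q).contDiffAt) ((hBwd p) y hy1)).contDiffWithinAt.congr ?_ ?_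
  · intro z hz
    rw [OpenPartialHomeomorph.trans_source] at hz
    obtain ⟨hz1, hz2⟩ := hz
    rw [OpenPartialHomeomorph.symm_source] at hz1
    have h1 : ↑((chart p).symm z) = Bwd p z := hBeq p z hz1
    calc (OpenPartialHomeomorph.trans (chart p).symm (chart q)) z
        = (chart q) ((chart p).symm z) := rfl
      _ = Fwd q ↑((chart p).symm z) := hFeq q _ (by simpa [OpenPartialHomeomorph.symm_source] using hz2)
      _ = Fwd q (Bwd p z) := by rw [h1]
  · have h1 : ↑((chart p).symm y) = Bwd p y := hBeq p y hy1
    calc (OpenPartialHomeomorph.trans (chart p).symm (chart q)) y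
        = (chart q) ((chart p).symm y) := rfl
      _ = Fwd q ↑((chart p).symm y) := hFeq q _ (by simpa [OpenPartialHomeomorph.symm_source] using hy2)
      _ = Fwd q (Bwd p y) := by rw [h1]

end General

section Apply

open RealInnerProductSpace

variable {l N : ℕ}

/-- For linearly independent `n₁, n₂` the orthogonal hyperplanes span everything. -/
theorem orth_sup_top {G : Type*} [NormedAddCommGroup G] [InnerProductSpace ℝ G]
    [FiniteDimensional ℝ G] {n₁ n₂ : G} (h : LinearIndependent ℝ ![n₁, n₂]) :
    (ℝ ∙ n₁)ᗮ ⊔ (ℝ ∙ n₂)ᗮ = ⊤ := by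
  have h2 := linearIndependent_fin2.mp h
  simp only [Matrix.cons_val_one, Matrix.head_cons, Matrix.cons_val_zero] at h2
  have hbot : (ℝ ∙ n₁) ⊓ (ℝ ∙ n₂) = ⊥ := by
    rw [Submodule.eq_bot_iff]
    rintro z ⟨hz1, hz2⟩
    rw [SetLike.mem_coe, Submodule.mem_span_singleton] at hz1 hz2
    obtain ⟨s, rfl⟩ := hz1
    obtain ⟨tt, hts⟩ := hz2
    by_contra hz
    have hs : s ≠ 0 := by rintro rfl; simp at hz
    have : (tt / s) • n₂ = n₁ := by
      rw [div_eq_mul_inv, mul_comm, mul_smul, hts, smul_smul, inv_mul_cancel₀ hs, one_smul]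
    exact h2.2 _ this
  have horth := Submodule.inf_orthogonal (ℝ ∙ n₁)ᗮ (ℝ ∙ n₂)ᗮ
  rw [Submodule.orthogonal_orthogonal, Submodule.orthogonal_orthogonal, hbot] at horth
  have h4 := congrArg Submodule.orthogonal horth
  rwa [Submodule.orthogonal_orthogonal, Submodule.bot_orthogonal_eq_top, eq_comm] at h4


theorem V_manifold_aux (l N : ℕ) (hl : 2 ≤ l) (hN : 2 ≤ N) :
    ∃ cs : ChartedSpace (EuclideanSpace ℝ (Fin (N * (l - 1)))) (V l N),
      @IsManifold ℝ _ (EuclideanSpace ℝ (Fin (N * (l - 1)))) _ _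
        (EuclideanSpace ℝ (Fin (N * (l - 1)))) _ (𝓡 (N * (l - 1))) (⊤ : ℕ∞) (V l N) _ cs := by
  classical
  set f : (EuclideanSpace ℝ (Fin l) × (Fin N → EuclideanSpace ℝ (Fin l))) → ((Fin N → ℝ) × EuclideanSpace ℝ (Fin l)) := fun q => ((fun k => ⟪q.2 k, q.2 k⟫ - 1), ∑ k, q.2 k) with hfdef
  set U : Set (EuclideanSpace ℝ (Fin l) × (Fin N → EuclideanSpace ℝ (Fin l))) := {q : EuclideanSpace ℝ (Fin l) × (Fin N → EuclideanSpace ℝ (Fin l)) | ∃ k₁ k₂ : Fin N, LinearIndependent ℝ ![q.2 k₁, q.2 k₂]} with hUdef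
  -- coordinate projections as continuous linear maps
  set Pk : Fin N → ((EuclideanSpace ℝ (Fin l) × (Fin N → EuclideanSpace ℝ (Fin l))) →L[ℝ] EuclideanSpace ℝ (Fin l)) :=
    fun k => (ContinuousLinearMap.proj k).comp (ContinuousLinearMap.snd ℝ _ _) with hPk
  have hcomp : ∀ k : Fin N, ContDiff ℝ ∞ (fun q : EuclideanSpace ℝ (Fin l) × (Fin N → EuclideanSpace ℝ (Fin l)) => q.2 k) :=
    fun k => (Pk k).contDiff
  -- U is open
  have hU : IsOpen U := by
    have h1 : U = ⋃ (k₁ : Fin N) (k₂ : Fin N),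
        (fun q : EuclideanSpace ℝ (Fin l) × (Fin N → EuclideanSpace ℝ (Fin l)) => ![q.2 k₁, q.2 k₂]) ⁻¹'
          {g : Fin 2 → EuclideanSpace ℝ (Fin l) | LinearIndependent ℝ g} := by
      ext q
      simp [hUdef, Set.mem_iUnion]
    rw [h1]
    refine isOpen_iUnion fun k₁ => isOpen_iUnion fun k₂ =>
      isOpen_setOf_linearIndependent.preimage ?_
    refine continuous_pi fun i => ?_
    fin_cases i
    · simpa using (hcomp k₁).continuous
    · simpa using (hcomp k₂).continuous
  -- f is smooth
  have hf : ContDiff ℝ ∞ f := by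
    refine ContDiff.prodMk ?_ ?_
    · exact contDiff_pi.mpr fun k => ((hcomp k).inner ℝ (hcomp k)).sub contDiff_const
    · exact ContDiff.sum fun k _ => hcomp k
  -- dimension count
  have hdim : Module.finrank ℝ (EuclideanSpace ℝ (Fin l) × (Fin N → EuclideanSpace ℝ (Fin l))) =
      N * (l - 1) + Module.finrank ℝ ((Fin N → ℝ) × EuclideanSpace ℝ (Fin l)) := by
    have e1 : Module.finrank ℝ (EuclideanSpace ℝ (Fin l) × (Fin N → EuclideanSpace ℝ (Fin l)))
        = l + N * l := by
      rw [Module.finrank_prod, Module.finrank_pi_fintype, finrank_euclideanSpace_fin]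
      simp [Finset.sum_const, mul_comm]
    have e2 : Module.finrank ℝ ((Fin N → ℝ) × EuclideanSpace ℝ (Fin l)) = N + l := by
      rw [Module.finrank_prod, Module.finrank_pi, finrank_euclideanSpace_fin]
      simp
    have e3 : N * (l - 1) + N = N * l := by
      obtain ⟨m, rfl⟩ : ∃ m, l = m + 1 := ⟨l - 1, by omega⟩
      simp [Nat.mul_succ]
    rw [e1, e2, ← e3]
    ring
  -- surjectivity of the derivative on the level set
  have hsurj : ∀ q ∈ U ∩ f ⁻¹' {0}, LinearMap.range (fderiv ℝ f q : (EuclideanSpace ℝ (Fin l) × (Fin N → EuclideanSpace ℝ (Fin l))) →ₗ[ℝ] ((Fin N → ℝ) × EuclideanSpace ℝ (Fin l))) = ⊤ := by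
    intro q hq
    have hq0 : f q = 0 := hq.2
    have hnorm : ∀ k, ⟪q.2 k, q.2 k⟫ = (1 : ℝ) := by
      intro k
      have h1 := congrArg Prod.fst hq0
      have h2 := congrFun h1 k
      exact sub_eq_zero.mp (show ⟪q.2 k, q.2 k⟫ - 1 = 0 from h2)
    have hPkD : ∀ k, HasFDerivAt (fun q : EuclideanSpace ℝ (Fin l) × (Fin N → EuclideanSpace ℝ (Fin l)) => q.2 k) (Pk k) q := fun k => (Pk k).hasFDerivAt
    set D : (EuclideanSpace ℝ (Fin l) × (Fin N → EuclideanSpace ℝ (Fin l))) →L[ℝ] ((Fin N → ℝ) × EuclideanSpace ℝ (Fin l)) := (ContinuousLinearMap.pi (fun k =>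
        (fderivInnerCLM ℝ (q.2 k, q.2 k)).comp ((Pk k).prod (Pk k)))).prod (∑ k, Pk k) with hDdef
    have hD : HasFDerivAt f D q := by
      refine HasFDerivAt.prodMk (hasFDerivAt_pi.mpr fun k => ?_) (HasFDerivAt.fun_sum fun k _ => hPkD k)
      exact ((hPkD k).inner ℝ (hPkD k)).sub_const 1
    rw [hD.fderiv, LinearMap.range_eq_top]
    rintro ⟨a, b⟩
    obtain ⟨k₁, k₂, hind⟩ := hq.1
    have hne : k₁ ≠ k₂ := by
      rintro rfl
      have := linearIndependent_fin2.mp hind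
      simp only [Matrix.cons_val_one, Matrix.head_cons, Matrix.cons_val_zero] at this
      exact this.2 1 (one_smul _ _)
    have htop := orth_sup_top hind
    set c : EuclideanSpace ℝ (Fin l) := b - ∑ k, (a k / 2) • q.2 k with hc
    have hcmem : c ∈ (ℝ ∙ q.2 k₁)ᗮ ⊔ (ℝ ∙ q.2 k₂)ᗮ := by rw [htop]; trivial
    obtain ⟨u₁, hu₁, u₂, hu₂, husum⟩ := Submodule.mem_sup.mp hcmem
    set w : Fin N → EuclideanSpace ℝ (Fin l) :=
      fun k => (a k / 2) • q.2 k + ((if k = k₁ then u₁ else 0) + (if k = k₂ then u₂ else 0))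
      with hw
    have horth1 : ⟪q.2 k₁, u₁⟫ = (0 : ℝ) :=
      hu₁ (q.2 k₁) (Submodule.mem_span_singleton_self _)
    have horth2 : ⟪q.2 k₂, u₂⟫ = (0 : ℝ) :=
      hu₂ (q.2 k₂) (Submodule.mem_span_singleton_self _)
    refine ⟨(0, w), ?_⟩
    have hDval : D (0, w) = ((fun k => ⟪q.2 k, w k⟫ + ⟪w k, q.2 k⟫), ∑ k, w k) := by
      rw [hDdef]
      refine Prod.ext ?_ ?_
      · funext k
        simp only [hPk, ContinuousLinearMap.prod_apply, ContinuousLinearMap.pi_apply,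
          ContinuousLinearMap.coe_comp', Function.comp_apply, ContinuousLinearMap.proj_apply,
          ContinuousLinearMap.coe_snd', fderivInnerCLM_apply]
      · simp only [hPk, ContinuousLinearMap.prod_apply, ContinuousLinearMap.sum_apply,
          ContinuousLinearMap.coe_comp', Function.comp_apply, ContinuousLinearMap.proj_apply,
          ContinuousLinearMap.coe_snd']
    change D (0, w) = (a, b)
    rw [hDval]
    have hinner : ∀ k, ⟪q.2 k, w k⟫ + ⟪w k, q.2 k⟫ = a k := by
      intro k
      have hQ : ⟪q.2 k, q.2 k⟫ = (1 : ℝ) := hnorm k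
      have hw1 : ⟪w k, q.2 k⟫ = a k / 2 := by
        simp only [hw]
        rcases eq_or_ne k k₁ with rfl | h1
        · rw [if_pos rfl, if_neg hne, add_zero, inner_add_left, real_inner_smul_left, hQ,
            real_inner_comm, horth1]
          ring
        · rcases eq_or_ne k k₂ with rfl | h2
          · rw [if_neg h1, if_pos rfl, zero_add, inner_add_left, real_inner_smul_left, hQ,
              real_inner_comm, horth2]
            ring
          · rw [if_neg h1, if_neg h2, add_zero, add_zero, real_inner_smul_left, hQ]
            ring
      have hw2 : ⟪q.2 k, w k⟫ = a k / 2 := by rw [real_inner_comm]; exact hw1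
      rw [hw2, hw1]
      ring
    have hsum : ∑ k, w k = b := by
      rw [hw]
      simp only [Finset.sum_add_distrib]
      rw [Finset.sum_ite_eq' Finset.univ k₁ (fun _ => u₁),
        Finset.sum_ite_eq' Finset.univ k₂ (fun _ => u₂)]
      simp only [Finset.mem_univ, if_true]
      have := husum
      rw [hc] at this
      have h9 : u₁ + u₂ = b - ∑ k, (a k / 2) • q.2 k := this
      rw [h9]
      abel
    refine Prod.ext ?_ ?_
    · funext k
      exact hinner k
    · exact hsum
  -- identify the set
  have hVset : V l N = U ∩ f ⁻¹' {0} := by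
    ext q
    constructor
    · rintro ⟨h1, h2, h3⟩
      refine ⟨h3, ?_⟩
      have : f q = 0 := by
        refine Prod.ext ?_ ?_
        · funext k
          have := h1 k
          simp only [hfdef]
          rw [real_inner_self_eq_norm_mul_norm, this]
          norm_num
        · simpa [hfdef] using h2
      simpa using this
    · rintro ⟨h3, h0⟩
      have h0' : f q = 0 := h0
      have hfst := congrArg Prod.fst h0'
      have hsnd := congrArg Prod.snd h0'
      refine ⟨?_, by simpa [hfdef] using hsnd, h3⟩
      intro k
      have h2 := congrFun hfst k
      simp only [hfdef, Prod.fst_zero, Pi.zero_apply, sub_eq_zero] at h2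
      have h4 : ‖q.2 k‖ * ‖q.2 k‖ = 1 := by
        rw [← real_inner_self_eq_norm_mul_norm, h2]
      rcases mul_self_eq_one_iff.mp h4 with h5 | h5
      · exact h5
      · exfalso
        have := norm_nonneg (q.2 k)
        rw [h5] at this
        linarith
  rw [hVset]
  exact levelSet_manifold f hf U hU _ hsurj hdim

end Apply

/-- `V` is a smooth manifold of dimension `N(l−1)`: it carries a
charted-space structure modeled on `ℝ^{N(l−1)}` making it a smooth manifold. -/
theorem V_is_smooth_manifold_of_dim (l N : ℕ) (hl : 2 ≤ l) (hN : 2 ≤ N) :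
    ∃ cs : ChartedSpace (EuclideanSpace ℝ (Fin (N * (l - 1)))) (V l N),
      @IsManifold ℝ _ (EuclideanSpace ℝ (Fin (N * (l - 1)))) _ _
        (EuclideanSpace ℝ (Fin (N * (l - 1)))) _ (𝓡 (N * (l - 1))) (⊤ : ℕ∞) (V l N) _ cs :=
  V_manifold_aux l N hl hN
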